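/- Mehler kernel / thermal density matrix property: with ⟨q|e^{−βâ†â}|q'⟩ = e^{β/2}(2π sinh β)^{−1/2} exp(−[(q²+q'²)cosh β − 2qq']/(2 sinh β)), the family of kernels satisfies the semigroup property ∫_ℝ ⟨q|e^{−β₁â†â}|q''⟩⟨q''|e^{−β₂â†â}|q'⟩ dq'' = ⟨q|e^{−(β₁+β₂)â†â}|q'⟩ for all β₁, β₂ > 0. -/

import Mathlib

open MeasureTheory

namespace Stmt15

/-- The Mehler kernel `⟨q| e^{-β â†â} |q'⟩` of the quantum harmonic oscillator. -/
noncomputable def mehler (β q q' : ℝ) : ℝ :=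
  Real.exp (β / 2) * (Real.sqrt (2 * Real.pi * Real.sinh β))⁻¹ *
    Real.exp (-(((q ^ 2 + q' ^ 2) * Real.cosh β - 2 * q * q') / (2 * Real.sinh β)))

lemma gauss_real (a b c : ℝ) (ha : 0 < a) :
    ∫ x : ℝ, Real.exp (-a * x ^ 2 + b * x + c)
      = Real.sqrt (Real.pi / a) * Real.exp (c + b ^ 2 / (4 * a)) := by
  have hc := integral_cexp_quadratic (b := (-a : ℂ)) (by simpa using ha) (b : ℂ) (c : ℂ)
  have h1 : ∀ x : ℝ, Complex.exp ((-a : ℂ) * (x : ℂ) ^ 2 + (b : ℂ) * x + c)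
      = ((Real.exp (-a * x ^ 2 + b * x + c) : ℝ) : ℂ) := by
    intro x; rw [Complex.ofReal_exp]; push_cast; ring_nf
  have h2 : (∫ x : ℝ, ((Real.exp (-a * x ^ 2 + b * x + c) : ℝ) : ℂ))
      = ∫ x : ℝ, Complex.exp ((-a : ℂ) * (x : ℂ) ^ 2 + (b : ℂ) * x + c) :=
    integral_congr_ae (Filter.Eventually.of_forall fun x => (h1 x).symm)
  have hac : (a : ℂ) ≠ 0 := by exact_mod_cast ha.ne'
  have h3 : ((Real.pi : ℂ) / -(-a : ℂ)) ^ (1 / 2 : ℂ)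
      = ((Real.sqrt (Real.pi / a) : ℝ) : ℂ) := by
    rw [neg_neg, show ((Real.pi : ℂ) / (a : ℂ)) = ((Real.pi / a : ℝ) : ℂ) by push_cast; ring,
      show ((1 / 2 : ℂ)) = ((1 / 2 : ℝ) : ℂ) by norm_num,
      ← Complex.ofReal_cpow (div_nonneg Real.pi_pos.le ha.le), Real.sqrt_eq_rpow]
  have h4 : Complex.exp ((c : ℂ) - (b : ℂ) ^ 2 / (4 * (-a : ℂ)))
      = ((Real.exp (c + b ^ 2 / (4 * a)) : ℝ) : ℂ) := by
    rw [Complex.ofReal_exp]; congr 1; push_cast; field_simp; ring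
  apply Complex.ofReal_inj.mp
  have h5 : Complex.ofReal (∫ x : ℝ, Real.exp (-a * x ^ 2 + b * x + c))
      = ∫ x : ℝ, ((Real.exp (-a * x ^ 2 + b * x + c) : ℝ) : ℂ) :=
    (integral_ofReal (𝕜 := ℂ)).symm
  rw [h5, h2, hc, h3, h4, ← Complex.ofReal_mul]

lemma expo_key (s1 c1 s2 c2 q q' : ℝ) (hs1 : s1 ≠ 0) (hs2 : s2 ≠ 0)
    (h12 : s1 * c2 + c1 * s2 ≠ 0)
    (e1 : c1 ^ 2 = s1 ^ 2 + 1) (e2 : c2 ^ 2 = s2 ^ 2 + 1) :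
    -(q ^ 2 * c1 / (2 * s1) + q' ^ 2 * c2 / (2 * s2)) +
      (q / s1 + q' / s2) ^ 2 / (4 * (c1 / (2 * s1) + c2 / (2 * s2)))
    = -(((q ^ 2 + q' ^ 2) * (c1 * c2 + s1 * s2) - 2 * q * q') / (2 * (s1 * c2 + c1 * s2))) := by
  rw [show c1 / (2 * s1) + c2 / (2 * s2) = (s1 * c2 + c1 * s2) / (2 * (s1 * s2)) by
    field_simp; ring]
  field_simp
  linear_combination (-4*q^2*s2^2) * e1 +
    (-4*s1^2*q'^2) * e2

/-- The Mehler kernels form a convolution semigroup: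
`∫_ℝ ⟨q|e^{-β₁â†â}|q''⟩ ⟨q''|e^{-β₂â†â}|q'⟩ dq'' = ⟨q|e^{-(β₁+β₂)â†â}|q'⟩`
for all `β₁, β₂ > 0`. -/
theorem stmt_15 (β₁ β₂ : ℝ) (h1 : 0 < β₁) (h2 : 0 < β₂) (q q' : ℝ) :
    (∫ q'' : ℝ, mehler β₁ q q'' * mehler β₂ q'' q') = mehler (β₁ + β₂) q q' := by
  have hs1 : 0 < Real.sinh β₁ := Real.sinh_pos_iff.mpr h1
  have hs2 : 0 < Real.sinh β₂ := Real.sinh_pos_iff.mpr h2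
  have hs12 : 0 < Real.sinh (β₁ + β₂) := Real.sinh_pos_iff.mpr (by linarith)
  have hc1 : 0 < Real.cosh β₁ := Real.cosh_pos _
  have hc2 : 0 < Real.cosh β₂ := Real.cosh_pos _
  have hπ : 0 < Real.pi := Real.pi_pos
  set A : ℝ := Real.cosh β₁ / (2 * Real.sinh β₁) + Real.cosh β₂ / (2 * Real.sinh β₂) with hA
  set B : ℝ := q / Real.sinh β₁ + q' / Real.sinh β₂ with hB
  set Cc : ℝ := -(q ^ 2 * Real.cosh β₁ / (2 * Real.sinh β₁) +
      q' ^ 2 * Real.cosh β₂ / (2 * Real.sinh β₂)) with hCc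
  have hApos : 0 < A := by positivity
  have hint : ∀ x : ℝ, mehler β₁ q x * mehler β₂ x q' =
      (Real.exp (β₁ / 2) * (Real.sqrt (2 * Real.pi * Real.sinh β₁))⁻¹ *
        (Real.exp (β₂ / 2) * (Real.sqrt (2 * Real.pi * Real.sinh β₂))⁻¹)) *
        Real.exp (-A * x ^ 2 + B * x + Cc) := by
    intro x
    have harg : (-A * x ^ 2 + B * x + Cc) =
        (-(((q ^ 2 + x ^ 2) * Real.cosh β₁ - 2 * q * x) / (2 * Real.sinh β₁))) +
        (-(((x ^ 2 + q' ^ 2) * Real.cosh β₂ - 2 * x * q') / (2 * Real.sinh β₂))) := by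
      rw [hA, hB, hCc]; field_simp; ring
    rw [harg, Real.exp_add, mehler, mehler]; ring
  rw [integral_congr_ae (Filter.Eventually.of_forall hint), integral_const_mul,
    gauss_real A B Cc hApos]
  -- constant part
  have hconst : Real.exp (β₁ / 2) * (Real.sqrt (2 * Real.pi * Real.sinh β₁))⁻¹ *
      (Real.exp (β₂ / 2) * (Real.sqrt (2 * Real.pi * Real.sinh β₂))⁻¹) *
      Real.sqrt (Real.pi / A)
      = Real.exp ((β₁ + β₂) / 2) * (Real.sqrt (2 * Real.pi * Real.sinh (β₁ + β₂)))⁻¹ := by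
    have hs12' : 0 < Real.sinh β₁ * Real.cosh β₂ + Real.cosh β₁ * Real.sinh β₂ := by
      rw [← Real.sinh_add]; exact hs12
    have hsq : (Real.sqrt (2 * Real.pi * Real.sinh β₁))⁻¹ *
        (Real.sqrt (2 * Real.pi * Real.sinh β₂))⁻¹ * Real.sqrt (Real.pi / A)
        = (Real.sqrt (2 * Real.pi * Real.sinh (β₁ + β₂)))⁻¹ := by
      rw [← Real.sqrt_inv, ← Real.sqrt_inv, ← Real.sqrt_inv,
        ← Real.sqrt_mul (by positivity), ← Real.sqrt_mul (by positivity)]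
      congr 1
      rw [hA, Real.sinh_add]
      field_simp
      ring
    rw [← hsq]
    rw [show Real.exp ((β₁ + β₂) / 2) = Real.exp (β₁ / 2) * Real.exp (β₂ / 2) by
      rw [← Real.exp_add]; ring_nf]
    ring
  rw [show Real.exp (β₁ / 2) * (Real.sqrt (2 * Real.pi * Real.sinh β₁))⁻¹ *
      (Real.exp (β₂ / 2) * (Real.sqrt (2 * Real.pi * Real.sinh β₂))⁻¹) *
      (Real.sqrt (Real.pi / A) * Real.exp (Cc + B ^ 2 / (4 * A)))
      = (Real.exp (β₁ / 2) * (Real.sqrt (2 * Real.pi * Real.sinh β₁))⁻¹ *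
        (Real.exp (β₂ / 2) * (Real.sqrt (2 * Real.pi * Real.sinh β₂))⁻¹) *
        Real.sqrt (Real.pi / A)) * Real.exp (Cc + B ^ 2 / (4 * A)) by ring,
    hconst]
  -- exponent part
  have hexp : Cc + B ^ 2 / (4 * A)
      = -(((q ^ 2 + q' ^ 2) * Real.cosh (β₁ + β₂) - 2 * q * q') / (2 * Real.sinh (β₁ + β₂))) := by
    rw [hA, hB, hCc, Real.sinh_add, Real.cosh_add]
    exact expo_key _ _ _ _ _ _ hs1.ne' hs2.ne'
      (by rw [← Real.sinh_add]; exact hs12.ne')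
      (Real.cosh_sq β₁) (Real.cosh_sq β₂)
  rw [hexp, mehler]

end Stmt15
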